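/- Let Ω ∈ (0,1) be a quadratic irrational whose continued fraction is purely m-periodic, Ω = [ā₁,…,ā_m]. Then the primitive vectors among the resonant convergents v(j) = (−p_j,q_j) are exactly v(1),…,v(m) if a₁ = 1, and exactly v(0),…,v(m−1) if a₁ ≥ 2. -/

import Mathlib

open Real Filter Matrix

noncomputable section

/-- Orbit of the Gauss map `g(x) = {1/x}` starting at `Ω`:
`x₀ = Ω`, `x_{j+1} = g(x_j)`. -/
def gaussOrbit (Ω : ℝ) : ℕ → ℝ
  | 0 => Ω
  | j + 1 => Int.fract (1 / gaussOrbit Ω j)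

/-- `cfA Ω j` is the partial quotient `a_{j+1}` of the continued fraction of `Ω`. -/
def cfA (Ω : ℝ) (j : ℕ) : ℤ := ⌊1 / gaussOrbit Ω j⌋

/-- The matrix `[[a, 1], [1, 0]]`. -/
def Acf (a : ℤ) : Matrix (Fin 2) (Fin 2) ℤ := !![a, 1; 1, 0]

/-- The product `A₁ ⋯ A_m` with `A_i = [[a_i, 1], [1, 0]]`. -/
def cfMatProd (Ω : ℝ) (m : ℕ) : Matrix (Fin 2) (Fin 2) ℤ :=
  ((List.range m).map fun i => Acf (cfA Ω i)).prod

/-- `cfQ Ω (j+1) = q_j`:  `q₋₁ = 0`, `q₀ = 1`, `q_j = a_j q_{j-1} + q_{j-2}`. -/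
def cfQ (Ω : ℝ) : ℕ → ℤ
  | 0 => 0
  | 1 => 1
  | j + 2 => cfA Ω j * cfQ Ω (j + 1) + cfQ Ω j

/-- `cfP Ω (j+1) = p_j`:  `p₋₁ = 1`, `p₀ = 0`, `p_j = a_j p_{j-1} + p_{j-2}`. -/
def cfP (Ω : ℝ) : ℕ → ℤ
  | 0 => 1
  | 1 => 0
  | j + 2 => cfA Ω j * cfP Ω (j + 1) + cfP Ω j

/-- The vector convergent `w(j) = (q_j, p_j)`. -/
def wconv (Ω : ℝ) (j : ℕ) : Fin 2 → ℤ := ![cfQ Ω (j + 1), cfP Ω (j + 1)]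

/-- The resonant convergent `v(j) = (−p_j, q_j)`. -/
def vconv (Ω : ℝ) (j : ℕ) : Fin 2 → ℤ := ![-cfP Ω (j + 1), cfQ Ω (j + 1)]

/-- A quadratic irrational number. -/
def IsQuadraticIrrational (Ω : ℝ) : Prop :=
  Irrational Ω ∧ ∃ A B C : ℤ, A ≠ 0 ∧ (A : ℝ) * Ω ^ 2 + (B : ℝ) * Ω + (C : ℝ) = 0

end
noncomputable section

/-- `⟨k, ω⟩ = k₁ + k₂ Ω` for `ω = (1, Ω)`. -/
def pairω (Ω : ℝ) (k : Fin 2 → ℤ) : ℝ := (k 0 : ℝ) + (k 1 : ℝ) * Ω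

/-- `|k|₁ = |k₁| + |k₂|`. -/
def norm1 (k : Fin 2 → ℤ) : ℤ := |k 0| + |k 1|

/-- `p⁰(q)`: the integer nearest to `qΩ`. -/
def p0 (Ω : ℝ) (q : ℤ) : ℤ := round ((q : ℝ) * Ω)

/-- `k⁰(q) = (−p⁰(q), q)`. -/
def kzero (Ω : ℝ) (q : ℤ) : Fin 2 → ℤ := ![-p0 Ω q, q]

/-- The set `A` of quasi-resonances: vectors `k⁰(q)`, `q ≥ 1`, with `|⟨k,ω⟩| < 1/2`. -/
def inA (Ω : ℝ) (k : Fin 2 → ℤ) : Prop :=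
  ∃ q : ℤ, 1 ≤ q ∧ k = kzero Ω q ∧ |pairω Ω k| < 1 / 2

/-- A quasi-resonance `k` is primitive if `U⁻¹k` is not a quasi-resonance. -/
def PrimitiveVec (Ω : ℝ) (U : Matrix (Fin 2) (Fin 2) ℤ) (k : Fin 2 → ℤ) : Prop :=
  inA Ω k ∧ ¬inA Ω (U⁻¹.mulVec k)

/-- A primitive integer `q ≥ 1`. -/
def PrimitiveInt (Ω : ℝ) (U : Matrix (Fin 2) (Fin 2) ℤ) (q : ℤ) : Prop :=
  1 ≤ q ∧ PrimitiveVec Ω U (kzero Ω q)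

/-- The resonant sequence `s(q, n) = Uⁿ k⁰(q)`. -/
def sres (Ω : ℝ) (U : Matrix (Fin 2) (Fin 2) ℤ) (q : ℤ) (n : ℕ) : Fin 2 → ℤ :=
  (U ^ n).mulVec (kzero Ω q)

/-- `U = σ (T⁻¹)ᵀ` with `σ = det T = (−1)^m` and `T = A₁⋯A_m`. -/
def Umat (Ω : ℝ) (m : ℕ) : Matrix (Fin 2) (Fin 2) ℤ :=
  ((-1 : ℤ) ^ m) • ((cfMatProd Ω m)⁻¹)ᵀ

/-- The numerator `γ_k = |⟨k,ω⟩| · |k|₁`. -/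
def gammaK (Ω : ℝ) (k : Fin 2 → ℤ) : ℝ := |pairω Ω k| * (norm1 k : ℝ)

/-- `K_q = |z_q|(1+Ω)/|c+bΩ²|`, where `z_q = cq + bpΩ`, `p = p⁰(q)`,
and `b, c` are the off-diagonal entries of `T = A₁⋯A_m = [[a,b],[c,d]]`. -/
def KqD (Ω : ℝ) (m : ℕ) (q : ℤ) : ℝ :=
  |(cfMatProd Ω m 1 0 : ℝ) * (q : ℝ) + (cfMatProd Ω m 0 1 : ℝ) * (p0 Ω q : ℝ) * Ω| * (1 + Ω) /
    |(cfMatProd Ω m 1 0 : ℝ) + (cfMatProd Ω m 0 1 : ℝ) * Ω ^ 2|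

/-- The limit numerator `γ*_q = |r_q| K_q` with `r_q = qΩ − p⁰(q)`. -/
def gammaStarQ (Ω : ℝ) (m : ℕ) (q : ℤ) : ℝ :=
  |(q : ℝ) * Ω - (p0 Ω q : ℝ)| * KqD Ω m q

end
namespace SplitAux5

open Matrix

lemma gaussOrbit_succ (Ω : ℝ) (j : ℕ) :
    gaussOrbit Ω (j + 1) = Int.fract (1 / gaussOrbit Ω j) := rfl

lemma cfQ_rec (Ω : ℝ) (j : ℕ) :
    cfQ Ω (j + 2) = cfA Ω j * cfQ Ω (j + 1) + cfQ Ω j := rfl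

lemma cfP_rec (Ω : ℝ) (j : ℕ) :
    cfP Ω (j + 2) = cfA Ω j * cfP Ω (j + 1) + cfP Ω j := rfl

variable {Ω : ℝ}

lemma orbit_props (h0 : 0 < Ω) (h1 : Ω < 1) (hirr : Irrational Ω) :
    ∀ j, 0 < gaussOrbit Ω j ∧ gaussOrbit Ω j < 1 ∧ Irrational (gaussOrbit Ω j) := by
  intro j
  induction j with
  | zero => exact ⟨h0, h1, hirr⟩
  | succ n ih =>
    obtain ⟨hp, hl, hi⟩ := ih
    have hinv : Irrational (1 / gaussOrbit Ω n) := by rw [one_div]; exact hi.inv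
    have hfr : Irrational (Int.fract (1 / gaussOrbit Ω n)) := by
      rw [Int.fract]; exact hinv.sub_intCast _
    have hne : Int.fract (1 / gaussOrbit Ω n) ≠ 0 := by
      intro h
      exact hfr ⟨0, by rw [Rat.cast_zero, h]⟩
    rw [gaussOrbit_succ]
    exact ⟨lt_of_le_of_ne (Int.fract_nonneg _) (Ne.symm hne), Int.fract_lt_one _, hfr⟩

lemma cfA_ge_one (h0 : 0 < Ω) (h1 : Ω < 1) (hirr : Irrational Ω) (j : ℕ) :
    1 ≤ cfA Ω j := by
  obtain ⟨hp, hl, _⟩ := orbit_props h0 h1 hirr j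
  have h : (1:ℝ) ≤ 1 / gaussOrbit Ω j := by
    rw [le_div_iff₀ hp]; linarith
  exact Int.le_floor.2 (by exact_mod_cast h)

lemma orbit_key (h0 : 0 < Ω) (h1 : Ω < 1) (hirr : Irrational Ω) (j : ℕ) :
    gaussOrbit Ω j * ((cfA Ω j : ℝ) + gaussOrbit Ω (j + 1)) = 1 := by
  obtain ⟨hp, _, _⟩ := orbit_props h0 h1 hirr j
  rw [gaussOrbit_succ, Int.fract, cfA]
  field_simp
  ring

noncomputable def prodX (Ω : ℝ) : ℕ → ℝ
  | 0 => Ω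
  | j + 1 => prodX Ω j * gaussOrbit Ω (j + 1)

lemma prodX_pos (h0 : 0 < Ω) (h1 : Ω < 1) (hirr : Irrational Ω) :
    ∀ j, 0 < prodX Ω j := by
  intro j
  induction j with
  | zero => exact h0
  | succ n ih => exact mul_pos ih (orbit_props h0 h1 hirr (n+1)).1

lemma prodX_succ_lt (h0 : 0 < Ω) (h1 : Ω < 1) (hirr : Irrational Ω) (j : ℕ) :
    prodX Ω (j + 1) < prodX Ω j := by
  have := (orbit_props h0 h1 hirr (j+1)).2.1
  have hp := prodX_pos h0 h1 hirr j
  have : prodX Ω j * gaussOrbit Ω (j+1) < prodX Ω j * 1 := by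
    apply mul_lt_mul_of_pos_left this hp
  simpa [prodX] using this

lemma prodX_strictAnti (h0 : 0 < Ω) (h1 : Ω < 1) (hirr : Irrational Ω) :
    StrictAnti (prodX Ω) :=
  strictAnti_nat_of_succ_lt (prodX_succ_lt h0 h1 hirr)

noncomputable def rr (Ω : ℝ) (j : ℕ) : ℝ := (cfQ Ω (j + 1) : ℝ) * Ω - (cfP Ω (j + 1) : ℝ)

lemma rr_eq (h0 : 0 < Ω) (h1 : Ω < 1) (hirr : Irrational Ω) :
    ∀ j, rr Ω j = (-1 : ℝ) ^ j * prodX Ω j := by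
  have key : ∀ j, rr Ω j = (-1 : ℝ) ^ j * prodX Ω j ∧
      rr Ω (j + 1) = (-1 : ℝ) ^ (j + 1) * prodX Ω (j + 1) := by
    intro j
    induction j with
    | zero =>
      have hk := orbit_key h0 h1 hirr 0
      have hg0 : gaussOrbit Ω 0 = Ω := rfl
      rw [hg0] at hk
      constructor
      · simp [rr, cfQ, cfP, prodX]
      · show (cfQ Ω 2 : ℝ) * Ω - (cfP Ω 2 : ℝ) = _
        rw [show (2 : ℕ) = 0 + 2 from rfl, cfQ_rec, cfP_rec]
        show ((cfA Ω 0 * cfQ Ω 1 + cfQ Ω 0 : ℤ) : ℝ) * Ω - ((cfA Ω 0 * cfP Ω 1 + cfP Ω 0 : ℤ) : ℝ)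
            = (-1 : ℝ) ^ (0 + 1) * (prodX Ω 0 * gaussOrbit Ω 1)
        have h1' : cfQ Ω 1 = 1 := rfl
        have h2' : cfQ Ω 0 = 0 := rfl
        have h3' : cfP Ω 1 = 0 := rfl
        have h4' : cfP Ω 0 = 1 := rfl
        rw [h1', h2', h3', h4']
        push_cast
        have hpx : prodX Ω 0 = Ω := rfl
        rw [hpx]
        nlinarith [hk]
    | succ n ih =>
      obtain ⟨ihn, ihs⟩ := ih
      refine ⟨ihs, ?_⟩
      have hk := orbit_key h0 h1 hirr (n + 1)
      have hrec : rr Ω (n + 2) = (cfA Ω (n + 1) : ℝ) * rr Ω (n + 1) + rr Ω n := by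
        show (cfQ Ω (n + 3) : ℝ) * Ω - (cfP Ω (n + 3) : ℝ) = _
        rw [show n + 3 = (n + 1) + 2 from rfl, cfQ_rec, cfP_rec]
        push_cast
        unfold rr
        ring
      have hk' : gaussOrbit Ω (n + 1) * ((cfA Ω (n + 1) : ℝ) + gaussOrbit Ω (n + 2)) = 1 := hk
      rw [hrec, ihn, ihs]
      show _ = (-1 : ℝ) ^ (n + 2) * (prodX Ω (n + 1) * gaussOrbit Ω (n + 2))
      have hp1 : prodX Ω (n + 1) = prodX Ω n * gaussOrbit Ω (n + 1) := rfl
      rw [hp1]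
      linear_combination (-((-1 : ℝ) ^ n * prodX Ω n)) * hk'
  exact fun j => (key j).1
lemma cfQ_facts (h0 : 0 < Ω) (h1 : Ω < 1) (hirr : Irrational Ω) :
    ∀ j, 0 ≤ cfQ Ω j ∧ 1 ≤ cfQ Ω (j + 1) ∧ cfQ Ω j ≤ cfQ Ω (j + 1) := by
  intro j
  induction j with
  | zero =>
    refine ⟨le_refl 0, le_refl 1, ?_⟩
    show (0 : ℤ) ≤ 1
    norm_num
  | succ n ih =>
    obtain ⟨hn0, hn1, hnle⟩ := ih
    have ha := cfA_ge_one h0 h1 hirr n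
    refine ⟨by linarith, ?_, ?_⟩ <;> rw [cfQ_rec] <;> nlinarith

lemma cfQ_mono (h0 : 0 < Ω) (h1 : Ω < 1) (hirr : Irrational Ω) :
    Monotone (cfQ Ω) :=
  monotone_nat_of_le_succ fun j => (cfQ_facts h0 h1 hirr j).2.2

lemma cfQ_pos (h0 : 0 < Ω) (h1 : Ω < 1) (hirr : Irrational Ω) (j : ℕ) :
    1 ≤ cfQ Ω (j + 1) := (cfQ_facts h0 h1 hirr j).2.1

lemma prodX_half (h0 : 0 < Ω) (h1 : Ω < 1) (hirr : Irrational Ω) {j : ℕ} (hj : 1 ≤ j) :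
    prodX Ω j < 1 / 2 := by
  have key : prodX Ω 1 < 1 / 2 := by
    have hk := orbit_key h0 h1 hirr 0
    have hg0 : gaussOrbit Ω 0 = Ω := rfl
    rw [hg0] at hk
    have hx1 : prodX Ω 1 = Ω * gaussOrbit Ω 1 := rfl
    have ha := cfA_ge_one h0 h1 hirr 0
    have ha' : (1 : ℝ) ≤ (cfA Ω 0 : ℝ) := by exact_mod_cast ha
    -- prodX 1 = 1 - a₁ Ω ; show a₁ Ω > 1/2
    have hpx : prodX Ω 1 = 1 - (cfA Ω 0 : ℝ) * Ω := by rw [hx1]; linarith [hk]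
    rcases lt_or_ge Ω (1/2) with hc | hc
    · -- a₁ > 1/Ω - 1 so a₁ Ω > 1 - Ω > 1/2
      have hfl : (1:ℝ) / Ω - 1 < (cfA Ω 0 : ℝ) := by
        have := Int.lt_floor_add_one (1 / gaussOrbit Ω 0)
        rw [hg0] at this
        have : (1:ℝ)/Ω < (cfA Ω 0 : ℝ) + 1 := by exact_mod_cast this
        linarith
      have : 1 - Ω < (cfA Ω 0 : ℝ) * Ω := by
        have h2 : ((1:ℝ)/Ω - 1) * Ω < (cfA Ω 0 : ℝ) * Ω := by
          apply mul_lt_mul_of_pos_right hfl h0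
        have h3 : ((1:ℝ)/Ω - 1) * Ω = 1 - Ω := by field_simp
        linarith
      rw [hpx]; linarith
    · -- Ω > 1/2 (irrational, ≠ 1/2), a₁ Ω ≥ Ω > 1/2
      have hne : Ω ≠ 1/2 := by
        intro h; rw [h] at hirr; exact hirr ⟨1/2, by norm_num⟩
      have hgt : 1/2 < Ω := lt_of_le_of_ne hc (Ne.symm hne)
      have : Ω ≤ (cfA Ω 0 : ℝ) * Ω := by nlinarith
      rw [hpx]; linarith
  rcases eq_or_lt_of_le hj with h | h
  · rw [← h]; exact key
  · exact lt_trans (prodX_strictAnti h0 h1 hirr h) key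

lemma round_eq_of_abs_lt {x : ℝ} {n : ℤ} (h : |x - (n : ℝ)| < 1 / 2) : round x = n := by
  rw [round_eq, Int.floor_eq_iff]
  rw [abs_lt] at h
  constructor <;> push_cast <;> linarith [h.1, h.2]

lemma pairω_vconv (j : ℕ) : pairω Ω (vconv Ω j) = rr Ω j := by
  simp [pairω, vconv, rr]
  ring

lemma inA_vconv (h0 : 0 < Ω) (h1 : Ω < 1) (hirr : Irrational Ω) {j : ℕ}
    (hlt : prodX Ω j < 1 / 2) : inA Ω (vconv Ω j) := by
  have hq := cfQ_pos h0 h1 hirr j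
  have habs : |(cfQ Ω (j+1) : ℝ) * Ω - (cfP Ω (j+1) : ℝ)| < 1 / 2 := by
    show |rr Ω j| < 1 / 2
    rw [rr_eq h0 h1 hirr j, abs_mul, abs_pow, abs_neg, abs_one, one_pow, one_mul,
      abs_of_pos (prodX_pos h0 h1 hirr j)]
    exact hlt
  have hround : p0 Ω (cfQ Ω (j+1)) = cfP Ω (j+1) := round_eq_of_abs_lt habs
  refine ⟨cfQ Ω (j+1), hq, ?_, ?_⟩
  · funext i
    fin_cases i <;> simp [vconv, kzero, hround]
  · rw [pairω_vconv]
    exact habs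

lemma not_inA_fst_pos (h0 : 0 < Ω) {k : Fin 2 → ℤ} (h : 0 < k 0) : ¬ inA Ω k := by
  rintro ⟨q, hq, hk, -⟩
  have hk0 : k 0 = -p0 Ω q := by rw [hk]; simp [kzero]
  have hq0 : (0:ℝ) ≤ (q : ℝ) * Ω := by
    have : (0:ℝ) ≤ (q:ℝ) := by exact_mod_cast le_trans zero_le_one hq
    positivity
  have : 0 ≤ p0 Ω q := by
    rw [p0, round_eq]
    apply Int.floor_nonneg.2
    linarith
  omega

lemma not_inA_snd_nonpos {k : Fin 2 → ℤ} (h : k 1 ≤ 0) : ¬ inA Ω k := by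
  rintro ⟨q, hq, hk, -⟩
  have hk1 : k 1 = q := by rw [hk]; simp [kzero]
  omega

lemma det_id (j : ℕ) : cfQ Ω (j + 1) * cfP Ω j - cfP Ω (j + 1) * cfQ Ω j = (-1) ^ j := by
  induction j with
  | zero => rfl
  | succ n ih =>
    rw [cfQ_rec, cfP_rec, pow_succ]
    linear_combination (-1 : ℤ) * ih
section Periodic

variable {m : ℕ}

lemma orbit_per (hper : gaussOrbit Ω m = Ω) : ∀ j, gaussOrbit Ω (m + j) = gaussOrbit Ω j := by
  intro j
  induction j with
  | zero => exact hper
  | succ n ih => rw [show m + (n + 1) = (m + n) + 1 from rfl, gaussOrbit_succ, ih, gaussOrbit_succ]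

lemma cfA_per (hper : gaussOrbit Ω m = Ω) (j : ℕ) : cfA Ω (m + j) = cfA Ω j := by
  rw [cfA, cfA, orbit_per hper]

lemma per_id (hper : gaussOrbit Ω m = Ω) :
    ∀ j, (cfQ Ω (m + j + 1) = cfQ Ω (m + 1) * cfQ Ω (j + 1) + cfQ Ω m * cfP Ω (j + 1)) ∧
      (cfP Ω (m + j + 1) = cfP Ω (m + 1) * cfQ Ω (j + 1) + cfP Ω m * cfP Ω (j + 1)) := by
  have key : ∀ j,
      ((cfQ Ω (m + j + 1) = cfQ Ω (m + 1) * cfQ Ω (j + 1) + cfQ Ω m * cfP Ω (j + 1)) ∧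
       (cfP Ω (m + j + 1) = cfP Ω (m + 1) * cfQ Ω (j + 1) + cfP Ω m * cfP Ω (j + 1))) ∧
      ((cfQ Ω (m + (j+1) + 1) = cfQ Ω (m + 1) * cfQ Ω (j + 2) + cfQ Ω m * cfP Ω (j + 2)) ∧
       (cfP Ω (m + (j+1) + 1) = cfP Ω (m + 1) * cfQ Ω (j + 2) + cfP Ω m * cfP Ω (j + 2))) := by
    intro j
    induction j with
    | zero =>
      have e1 : cfQ Ω 1 = 1 := rfl
      have e0 : cfQ Ω 0 = 0 := rfl
      have f1 : cfP Ω 1 = 0 := rfl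
      have f0 : cfP Ω 0 = 1 := rfl
      have e2 : cfQ Ω 2 = cfA Ω 0 := by rw [show (2:ℕ) = 0 + 2 from rfl, cfQ_rec, e1, e0]; ring
      have f2 : cfP Ω 2 = 1 := by rw [show (2:ℕ) = 0 + 2 from rfl, cfP_rec, f1, f0]; ring
      have hA0 : cfA Ω m = cfA Ω 0 := by simpa using cfA_per hper 0
      have e2' : cfQ Ω (0 + 2) = cfA Ω 0 := e2
      have f2' : cfP Ω (0 + 2) = 1 := f2
      refine ⟨⟨by rw [e1, f1]; ring, by rw [e1, f1]; ring⟩, ?_, ?_⟩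
      · rw [show m + (0 + 1) + 1 = m + 2 from by omega, cfQ_rec, hA0, e2', f2']
        ring
      · rw [show m + (0 + 1) + 1 = m + 2 from by omega, cfP_rec, hA0, e2', f2']
        ring
    | succ n ih =>
      obtain ⟨ih0, ih1⟩ := ih
      have hA : cfA Ω (m + n + 1) = cfA Ω (n + 1) := by
        rw [show m + n + 1 = m + (n + 1) from by omega, cfA_per hper]
      have h3 : m + (n + 1 + 1) + 1 = m + n + 1 + 2 := by omega
      have h4 : m + n + 1 + 1 = m + (n + 1) + 1 := by omega
      refine ⟨ih1, ?_, ?_⟩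
      · rw [h3, cfQ_rec, hA, h4, ih1.1, ih0.1, cfQ_rec Ω (n + 1), cfP_rec Ω (n + 1)]
        ring
      · rw [h3, cfP_rec, hA, h4, ih1.2, ih0.2, cfQ_rec Ω (n + 1), cfP_rec Ω (n + 1)]
        ring
  exact fun j => (key j).1

end Periodic

lemma matProd_eq (Ω : ℝ) : ∀ n, cfMatProd Ω n = !![cfQ Ω (n+1), cfQ Ω n; cfP Ω (n+1), cfP Ω n] := by
  intro n
  induction n with
  | zero =>
    show (List.prod []) = _
    · show (1 : Matrix (Fin 2) (Fin 2) ℤ) = _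
      rw [Matrix.one_fin_two]
      rfl
  | succ n ih =>
    show ((List.range (n+1)).map fun i => Acf (cfA Ω i)).prod = _
    rw [List.range_succ, List.map_append, List.prod_append]
    have : ((List.range n).map fun i => Acf (cfA Ω i)).prod = cfMatProd Ω n := rfl
    rw [this, ih]
    show _ * ([Acf (cfA Ω n)]).prod = _
    rw [List.prod_singleton, Acf, Matrix.mul_fin_two, cfQ_rec, cfP_rec]
    congr 1 <;> ring_nf
lemma mulVec_two (a b c d x y : ℤ) :
    (!![a, b; c, d]).mulVec ![x, y] = ![a * x + b * y, c * x + d * y] := by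
  funext i
  fin_cases i <;> simp [Matrix.mulVec, dotProduct, Fin.sum_univ_two]

lemma neg_one_sq_pow (m : ℕ) : ((-1 : ℤ) ^ m) * ((-1 : ℤ) ^ m) = 1 := by
  rw [← pow_add]
  exact Even.neg_one_pow ⟨m, rfl⟩

section UM

variable {m : ℕ}

lemma T_mul_right (hdet : cfQ Ω (m+1) * cfP Ω m - cfP Ω (m+1) * cfQ Ω m = (-1)^m) :
    cfMatProd Ω m * ((-1 : ℤ) ^ m • !![cfP Ω m, -(cfQ Ω m); -(cfP Ω (m+1)), cfQ Ω (m+1)]) = 1 := by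
  have he := neg_one_sq_pow m
  rw [matProd_eq, Matrix.mul_smul, Matrix.mul_fin_two]
  funext i j
  fin_cases i <;> fin_cases j <;>
    simp [Matrix.one_apply] <;>
    first
      | linear_combination ((-1 : ℤ) ^ m) * hdet + he
      | ring

lemma Umat_eq' : Umat Ω m = !![cfP Ω m, -(cfP Ω (m+1)); -(cfQ Ω m), cfQ Ω (m+1)] := by
  have hdet := det_id (Ω := Ω) m
  have hinv := Matrix.inv_eq_right_inv (T_mul_right hdet)
  rw [Umat, hinv, Matrix.transpose_smul, smul_smul, neg_one_sq_pow m, one_smul]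
  funext i j
  fin_cases i <;> fin_cases j <;> simp [Matrix.transpose]

lemma U_mul_right (hdet : cfQ Ω (m+1) * cfP Ω m - cfP Ω (m+1) * cfQ Ω m = (-1)^m) :
    Umat Ω m * ((-1 : ℤ) ^ m • !![cfQ Ω (m+1), cfP Ω (m+1); cfQ Ω m, cfP Ω m]) = 1 := by
  have he := neg_one_sq_pow m
  rw [Umat_eq', Matrix.mul_smul, Matrix.mul_fin_two]
  funext i j
  fin_cases i <;> fin_cases j <;>
    simp [Matrix.one_apply] <;>
    first
      | linear_combination ((-1 : ℤ) ^ m) * hdet + he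
      | ring

lemma Uinv_eq : (Umat Ω m)⁻¹ = (-1 : ℤ) ^ m • !![cfQ Ω (m+1), cfP Ω (m+1); cfQ Ω m, cfP Ω m] :=
  Matrix.inv_eq_right_inv (U_mul_right (det_id m))

lemma Uinv_mul_U : (Umat Ω m)⁻¹ * Umat Ω m = 1 := by
  rw [Uinv_eq]
  exact mul_eq_one_comm.1 (U_mul_right (det_id m))

lemma U_mulVec_vconv (hper : gaussOrbit Ω m = Ω) (j : ℕ) :
    (Umat Ω m).mulVec (vconv Ω j) = vconv Ω (m + j) := by
  obtain ⟨hQ, hP⟩ := per_id hper j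
  rw [Umat_eq', vconv, mulVec_two]
  funext i
  fin_cases i <;> simp [vconv, hP, hQ] <;> ring

lemma Uinv_mulVec_high (hper : gaussOrbit Ω m = Ω) (j : ℕ) :
    (Umat Ω m)⁻¹.mulVec (vconv Ω (m + j)) = vconv Ω j := by
  rw [← U_mulVec_vconv hper j, Matrix.mulVec_mulVec, Uinv_mul_U, Matrix.one_mulVec]

lemma Uinv_mulVec_low (j : ℕ) :
    (Umat Ω m)⁻¹.mulVec (vconv Ω j) =
      (-1 : ℤ) ^ m •
        ![cfP Ω (m+1) * cfQ Ω (j+1) - cfQ Ω (m+1) * cfP Ω (j+1),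
          cfP Ω m * cfQ Ω (j+1) - cfQ Ω m * cfP Ω (j+1)] := by
  rw [Uinv_eq, Matrix.smul_mulVec, vconv, mulVec_two]
  congr 1
  funext i
  fin_cases i <;> simp <;> ring

end UM
lemma c_pos (h0 : 0 < Ω) (h1 : Ω < 1) (hirr : Irrational Ω) {m j : ℕ} (hj : j < m) :
    0 < (-1 : ℤ) ^ j * (cfP Ω (m+1) * cfQ Ω (j+1) - cfQ Ω (m+1) * cfP Ω (j+1)) := by
  have hkey : ((cfP Ω (m+1) : ℝ) * (cfQ Ω (j+1) : ℝ) - (cfQ Ω (m+1) : ℝ) * (cfP Ω (j+1) : ℝ))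
      = (cfQ Ω (m+1) : ℝ) * rr Ω j - (cfQ Ω (j+1) : ℝ) * rr Ω m := by
    rw [rr, rr]; ring
  have hrj := rr_eq h0 h1 hirr j
  have hrm := rr_eq h0 h1 hirr m
  have hej : ((-1:ℝ)^j) * ((-1:ℝ)^j) = 1 := by
    rw [← pow_add]; exact Even.neg_one_pow ⟨j, rfl⟩
  have hs : ((-1:ℝ)^j) * ((-1:ℝ)^m) ≤ 1 := by
    rw [← pow_add]
    exact le_of_abs_le (by rw [abs_pow, abs_neg, abs_one, one_pow])
  have hq1 : (1:ℝ) ≤ (cfQ Ω (j+1) : ℝ) := by exact_mod_cast cfQ_pos h0 h1 hirr j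
  have hqm : ((cfQ Ω (j+1) : ℝ)) ≤ (cfQ Ω (m+1) : ℝ) := by
    exact_mod_cast cfQ_mono h0 h1 hirr (by omega : j + 1 ≤ m + 1)
  have hPpos : 0 < prodX Ω m := prodX_pos h0 h1 hirr m
  have hPlt : prodX Ω m < prodX Ω j := prodX_strictAnti h0 h1 hirr hj
  have hreal : (0:ℝ) < (-1:ℝ)^j *
      ((cfP Ω (m+1) : ℝ) * (cfQ Ω (j+1) : ℝ) - (cfQ Ω (m+1) : ℝ) * (cfP Ω (j+1) : ℝ)) := by
    rw [hkey, hrj, hrm]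
    have expand : (-1:ℝ)^j * ((cfQ Ω (m+1) : ℝ) * ((-1:ℝ)^j * prodX Ω j)
        - (cfQ Ω (j+1) : ℝ) * ((-1:ℝ)^m * prodX Ω m))
        = (cfQ Ω (m+1) : ℝ) * prodX Ω j
          - ((-1:ℝ)^j * (-1:ℝ)^m) * ((cfQ Ω (j+1) : ℝ) * prodX Ω m) := by
      linear_combination ((cfQ Ω (m+1) : ℝ) * prodX Ω j) * hej
    rw [expand]
    nlinarith [mul_pos (lt_of_lt_of_le (lt_of_lt_of_le zero_lt_one hq1) hqm) hPpos,
      mul_nonneg (le_trans zero_le_one hq1) (le_of_lt hPpos)]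
  have : (0:ℝ) < (((-1 : ℤ) ^ j * (cfP Ω (m+1) * cfQ Ω (j+1) - cfQ Ω (m+1) * cfP Ω (j+1)) : ℤ) : ℝ) := by
    push_cast
    convert hreal using 1
  exact_mod_cast this

lemma sign_even {n j : ℕ} (h : Even (n + j)) : (-1 : ℤ) ^ n = (-1) ^ j := by
  have h2 : ((-1:ℤ)^j) * ((-1:ℤ)^j) = 1 := neg_one_sq_pow j
  have h3 : (-1:ℤ)^n * (-1)^j = 1 := by rw [← pow_add]; exact Even.neg_one_pow h
  linear_combination ((-1:ℤ)^j) * h3 - ((-1:ℤ)^n) * h2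

lemma sign_odd {n j : ℕ} (h : Odd (n + j)) : (-1 : ℤ) ^ n = -(-1) ^ j := by
  have h2 : ((-1:ℤ)^j) * ((-1:ℤ)^j) = 1 := neg_one_sq_pow j
  have h3 : (-1:ℤ)^n * (-1)^j = -1 := by rw [← pow_add]; exact Odd.neg_one_pow h
  linear_combination ((-1:ℤ)^j) * h3 - ((-1:ℤ)^n) * h2

lemma core_notA (h0 : 0 < Ω) (h1 : Ω < 1) (hirr : Irrational Ω) {m : ℕ} (hm : 1 ≤ m)
    {j : ℕ} (hj : j < m) : ¬ inA Ω ((Umat Ω m)⁻¹.mulVec (vconv Ω j)) := by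
  obtain ⟨n, rfl⟩ : ∃ n, m = n + 1 := ⟨m - 1, by omega⟩
  rw [Uinv_mulVec_low]
  by_cases hjn : j = n
  · apply not_inA_snd_nonpos
    have hd0 : cfP Ω (n+1) * cfQ Ω (j+1) - cfQ Ω (n+1) * cfP Ω (j+1) = 0 := by
      rw [hjn]; ring
    simp [Pi.smul_apply, smul_eq_mul, hd0]
  · have hjn' : j < n := by omega
    have hdpos := c_pos h0 h1 hirr (m := n) hjn'
    have hcpos := c_pos h0 h1 hirr (m := n + 1) hj
    rcases Nat.even_or_odd (n + 1 + j) with hpar | hpar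
    · apply not_inA_fst_pos h0
      have hsign : (-1 : ℤ) ^ (n + 1) = (-1) ^ j := sign_even hpar
      have : ((-1 : ℤ) ^ (n+1) • ![cfP Ω (n+1+1) * cfQ Ω (j+1) - cfQ Ω (n+1+1) * cfP Ω (j+1),
          cfP Ω (n+1) * cfQ Ω (j+1) - cfQ Ω (n+1) * cfP Ω (j+1)]) 0
          = (-1 : ℤ) ^ j * (cfP Ω (n+1+1) * cfQ Ω (j+1) - cfQ Ω (n+1+1) * cfP Ω (j+1)) := by
        simp [Pi.smul_apply, smul_eq_mul, hsign]
      rw [this]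
      exact hcpos
    · apply not_inA_snd_nonpos
      have hsign : (-1 : ℤ) ^ (n + 1) = -(-1) ^ j := sign_odd hpar
      have : ((-1 : ℤ) ^ (n+1) • ![cfP Ω (n+1+1) * cfQ Ω (j+1) - cfQ Ω (n+1+1) * cfP Ω (j+1),
          cfP Ω (n+1) * cfQ Ω (j+1) - cfQ Ω (n+1) * cfP Ω (j+1)]) 1
          = -((-1 : ℤ) ^ j * (cfP Ω (n+1) * cfQ Ω (j+1) - cfQ Ω (n+1) * cfP Ω (j+1))) := by
        simp [Pi.smul_apply, smul_eq_mul, hsign]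
      rw [this]
      linarith

lemma half_lt_of_a1 (h0 : 0 < Ω) (ha : cfA Ω 0 = 1) : 1 / 2 < Ω := by
  have h : (1:ℝ) / gaussOrbit Ω 0 < ((1:ℤ) : ℝ) + 1 := by
    have hfl := Int.lt_floor_add_one ((1:ℝ) / gaussOrbit Ω 0)
    have hc0 : ⌊(1:ℝ) / gaussOrbit Ω 0⌋ = 1 := ha
    have hc : (⌊(1:ℝ) / gaussOrbit Ω 0⌋ : ℝ) = ((1:ℤ) : ℝ) := by exact_mod_cast hc0
    linarith
  have hg : gaussOrbit Ω 0 = Ω := rfl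
  rw [hg] at h
  push_cast at h
  rw [div_lt_iff₀ h0] at h
  linarith

lemma lt_half_of_a2 (h0 : 0 < Ω) (hirr : Irrational Ω) (ha : 2 ≤ cfA Ω 0) : Ω < 1 / 2 := by
  have h : ((2:ℤ) : ℝ) ≤ 1 / gaussOrbit Ω 0 := by
    apply (Int.le_floor.1 ha).trans_eq rfl
  have hg : gaussOrbit Ω 0 = Ω := rfl
  rw [hg] at h
  push_cast at h
  rw [le_div_iff₀ h0] at h
  have hne : Ω ≠ 1 / 2 := by
    intro he; rw [he] at hirr; exact hirr ⟨1/2, by norm_num⟩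
  rcases lt_or_eq_of_le (by linarith : Ω ≤ 1/2) with hh | hh
  · exact hh
  · exact absurd hh hne

lemma rr_zero : rr Ω 0 = Ω := by
  rw [rr]
  have e1 : cfQ Ω 1 = 1 := rfl
  have f1 : cfP Ω 1 = 0 := rfl
  rw [e1, f1]
  push_cast
  ring

lemma prodX_zero : prodX Ω 0 = Ω := rfl

lemma v0_not_inA (hΩ : 1 / 2 < Ω) : ¬ inA Ω (vconv Ω 0) := by
  rintro ⟨q, hq, hk, habs⟩
  rw [pairω_vconv, rr_zero, abs_of_pos (by linarith)] at habs
  linarith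
end SplitAux5

/-- Lemma 2(b): for `Ω ∈ (0,1)` a quadratic irrational with purely `m`-periodic
continued fraction, the primitive vectors among the resonant convergents `v(j)` are
exactly `v(1),…,v(m)` if `a₁ = 1`, and exactly `v(0),…,v(m−1)` if `a₁ ≥ 2`. -/
theorem splitting_quadratic_stmt5
    (Ω : ℝ) (m : ℕ) (hm : 1 ≤ m) (h0 : 0 < Ω) (h1 : Ω < 1)
    (hquad : IsQuadraticIrrational Ω)
    (hper : gaussOrbit Ω m = Ω) :
    (cfA Ω 0 = 1 →
      ∀ j : ℕ, PrimitiveVec Ω (Umat Ω m) (vconv Ω j) ↔ (1 ≤ j ∧ j ≤ m)) ∧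
    (2 ≤ cfA Ω 0 →
      ∀ j : ℕ, PrimitiveVec Ω (Umat Ω m) (vconv Ω j) ↔ j < m) := by
  have hirr := hquad.1
  constructor
  · intro ha1 j
    have hΩ : 1/2 < Ω := SplitAux5.half_lt_of_a1 h0 ha1
    constructor
    · rintro ⟨hinA, hnot⟩
      constructor
      · by_contra hj0
        have hj0' : j = 0 := by omega
        rw [hj0'] at hinA
        exact SplitAux5.v0_not_inA hΩ hinA
      · by_contra hjm
        push_neg at hjm
        obtain ⟨i, rfl⟩ : ∃ i, j = m + i := ⟨j - m, by omega⟩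
        have hi : 1 ≤ i := by omega
        apply hnot
        rw [SplitAux5.Uinv_mulVec_high hper]
        exact SplitAux5.inA_vconv h0 h1 hirr (SplitAux5.prodX_half h0 h1 hirr hi)
    · rintro ⟨hj1, hjm⟩
      refine ⟨SplitAux5.inA_vconv h0 h1 hirr (SplitAux5.prodX_half h0 h1 hirr hj1), ?_⟩
      rcases lt_or_eq_of_le hjm with hlt | heq
      · exact SplitAux5.core_notA h0 h1 hirr hm hlt
      · have h2 := SplitAux5.Uinv_mulVec_high (Ω := Ω) hper 0
        simp only [Nat.add_zero] at h2
        rw [heq, h2]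
        exact SplitAux5.v0_not_inA hΩ
  · intro ha2 j
    have hΩ : Ω < 1/2 := SplitAux5.lt_half_of_a2 h0 hirr ha2
    have hprod : ∀ i : ℕ, SplitAux5.prodX Ω i < 1/2 := by
      intro i
      rcases Nat.eq_zero_or_pos i with h | h
      · rw [h, SplitAux5.prodX_zero]; exact hΩ
      · exact SplitAux5.prodX_half h0 h1 hirr h
    constructor
    · rintro ⟨hinA, hnot⟩
      by_contra hjm
      push_neg at hjm
      obtain ⟨i, rfl⟩ : ∃ i, j = m + i := ⟨j - m, by omega⟩
      apply hnot
      rw [SplitAux5.Uinv_mulVec_high hper]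
      exact SplitAux5.inA_vconv h0 h1 hirr (hprod i)
    · intro hj
      exact ⟨SplitAux5.inA_vconv h0 h1 hirr (hprod j),
        SplitAux5.core_notA h0 h1 hirr hm hj⟩
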